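/- arXiv:1802.03323 — 2 statements merged into one kernel-verified Lean document; each statement's English description precedes it below -/
import Mathlib

section
/- Let a, b, c ∈ K^× be elements whose images rv(a), rv(b), rv(c) in RV^* are pairwise distinct, and let a', b', c' ∈ K^× satisfy rv(a') = rv(a), rv(b') = rv(b) and rv(c') = rv(c). Then C(a,b,c) holds if and only if C(a',b',c') holds. -/
open FirstOrder Language Set

universe u v

/-- Data of a nontrivial valuation on `K` with value group `Γ` (written additively,
with `⊤` playing the role of `∞`), surjective onto `Γ` on `K^×`. -/
structure ValData (K : Type u) (Γ : Type v) [Field K] [AddCommGroup Γ] [LinearOrder Γ] [IsOrderedAddMonoid Γ] where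
  v : K → WithTop Γ
  v_top : ∀ x : K, v x = ⊤ ↔ x = 0
  v_mul : ∀ x y : K, v (x * y) = v x + v y
  v_add : ∀ x y : K, min (v x) (v y) ≤ v (x + y)
  v_surj : ∀ γ : Γ, ∃ x : K, v x = (γ : WithTop Γ)

namespace ValData

variable {K : Type u} {Γ : Type v} [Field K] [AddCommGroup Γ] [LinearOrder Γ] [IsOrderedAddMonoid Γ]

/-- `B` is an open ball (the whole field counts as an open ball). -/
def OBall (V : ValData K Γ) (B : Set K) : Prop :=
  B = univ ∨ ∃ (a : K) (γ : Γ), B = {x : K | (γ : WithTop Γ) < V.v (x - a)}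

/-- `B` is a closed ball. -/
def CBall (V : ValData K Γ) (B : Set K) : Prop :=
  ∃ (a : K) (γ : Γ), B = {x : K | (γ : WithTop Γ) ≤ V.v (x - a)}

/-- `B` is a ball. -/
def IsBall (V : ValData K Γ) (B : Set K) : Prop := V.OBall B ∨ V.CBall B

/-- The `C`-relation: `C(x,y,z)` iff `v(x−y) = v(x−z) < v(y−z)`. -/
def Crel (V : ValData K Γ) (x y z : K) : Prop :=
  V.v (x - y) = V.v (x - z) ∧ V.v (x - y) < V.v (y - z)

/-- `rv x = rv y`, i.e. `v x = v y < v (x - y)`. -/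
def rvEq (V : ValData K Γ) (x y : K) : Prop :=
  V.v x = V.v y ∧ V.v x < V.v (x - y)

/-- `f` restricted to the open ball `B` is a `C`-isomorphism. -/
def CIso (V : ValData K Γ) (B : Set K) (f : K → K) : Prop :=
  V.OBall (f '' B) ∧ ∀ x ∈ B, ∀ y ∈ B, ∀ z ∈ B, (V.Crel x y z ↔ V.Crel (f x) (f y) (f z))

/-- `f : X → K` is a local `C`-isomorphism. -/
def LocalCIso (V : ValData K Γ) (X : Set K) (f : K → K) : Prop :=
  ∀ x ∈ X, ∃ B : Set K, V.OBall B ∧ x ∈ B ∧ B ⊆ X ∧ V.CIso B f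

end ValData

/-- Finite boolean combinations of members of a family `B` of sets. -/
inductive BoolComb {α : Type*} (B : Set (Set α)) : Set α → Prop
  | base {s : Set α} : s ∈ B → BoolComb B s
  | compl {s : Set α} : BoolComb B s → BoolComb B sᶜ
  | inter {s t : Set α} : BoolComb B s → BoolComb B t → BoolComb B (s ∩ t)

/-- The balls of an `L`-structure `K'`, computed via a formula `φsub` (defining the graph of
subtraction) and a formula `φdiv` (defining the divisibility relation `v x ≤ v y`):
`K'` itself, the sets `{x : div (b, x − a)}` and the sets `{x : ¬ div (x − a, b)}`. -/
def ballsVia (L : Language) (K' : Type u) [L.Structure K']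
    (φsub : L.Formula (Fin 3)) (φdiv : L.Formula (Fin 2)) : Set (Set K') :=
  {univ} ∪
    {S | ∃ a b : K', S = {x : K' | ∃ z : K', φsub.Realize ![x, a, z] ∧ φdiv.Realize ![b, z]}} ∪
    {S | ∃ a b : K', S = {x : K' | ∃ z : K', φsub.Realize ![x, a, z] ∧ ¬ φdiv.Realize ![z, b]}}

/-- `(K, L)` is `C`-minimal: in every `L`-structure elementarily equivalent to `K`, every
definable (with parameters) subset is a finite boolean combination of balls. -/
def CMin (L : Language) (K : Type u) [L.Structure K]
    (φsub : L.Formula (Fin 3)) (φdiv : L.Formula (Fin 2)) : Prop :=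
  ∀ (K' : Type u) [L.Structure K'], (K ≅[L] K') →
    ∀ S : Set K', Set.Definable₁ (univ : Set K') L S →
      BoolComb (ballsVia L K' φsub φdiv) S

section Defs

variable {K : Type u} {Γ : Type v} [Field K] [AddCommGroup Γ] [LinearOrder Γ] [IsOrderedAddMonoid Γ]
variable (V : ValData K Γ) (L : Language) [L.Structure K]

/-- A subset of `K` is definable (with parameters). -/
def Def1 (X : Set K) : Prop := Set.Definable₁ (univ : Set K) L X

/-- A subset of `K^m` is definable (with parameters). -/
def DefSet {m : ℕ} (W : Set (Fin m → K)) : Prop := Set.Definable (univ : Set K) L W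

/-- A function `f` defined on `X ⊆ K` is definable (its graph is definable). -/
def DefFunOn (X : Set K) (f : K → K) : Prop :=
  Set.Definable (univ : Set K) L {p : Fin 2 → K | p 0 ∈ X ∧ p 1 = f (p 0)}

/-- A subset of `K^m × K` (a definable family of subsets of `K`) is definable. -/
def DefFamSet {m : ℕ} (X : Set ((Fin m → K) × K)) : Prop :=
  Set.Definable (univ : Set K) L {p : (Fin m ⊕ Fin 1) → K | (p ∘ Sum.inl, p (Sum.inr 0)) ∈ X}

/-- A family of functions `f_w` defined on `X ⊆ K^m × K` is definable. -/
def DefFamFun {m : ℕ} (X : Set ((Fin m → K) × K)) (f : (Fin m → K) → K → K) : Prop :=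
  Set.Definable (univ : Set K) L {p : (Fin m ⊕ Fin 2) → K |
    (p ∘ Sum.inl, p (Sum.inr 0)) ∈ X ∧ p (Sum.inr 1) = f (p ∘ Sum.inl) (p (Sum.inr 0))}

/-- A function `h : Γ → Γ` is definable iff `{(x,y) ∈ K^× × K^× : v y = h (v x)}` is definable. -/
def DefGFun (h : Γ → Γ) : Prop :=
  Set.Definable (univ : Set K) L {p : Fin 2 → K |
    ∃ γ : Γ, V.v (p 0) = (γ : WithTop Γ) ∧ V.v (p 1) = ((h γ : Γ) : WithTop Γ)}

/-- A function `a : Y → Γ`, `Y ⊆ K`, is definable iff `{(y,s) : y ∈ Y, v s = a y}` is definable. -/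
def DefGOn (Y : Set K) (a : K → Γ) : Prop :=
  Set.Definable (univ : Set K) L {p : Fin 2 → K |
    p 0 ∈ Y ∧ V.v (p 1) = ((a (p 0) : Γ) : WithTop Γ)}

/-- A function `a : W → Γ`, `W ⊆ K^m`, is definable. -/
def DefGOnW {m : ℕ} (W : Set (Fin m → K)) (a : (Fin m → K) → Γ) : Prop :=
  Set.Definable (univ : Set K) L {p : (Fin m ⊕ Fin 1) → K |
    (p ∘ Sum.inl) ∈ W ∧ V.v (p (Sum.inr 0)) = ((a (p ∘ Sum.inl) : Γ) : WithTop Γ)}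

/-- A function `a : Y → Γ`, `Y ⊆ K^m × K`, is definable. -/
def DefGOnFam {m : ℕ} (Y : Set ((Fin m → K) × K)) (a : (Fin m → K) × K → Γ) : Prop :=
  Set.Definable (univ : Set K) L {p : (Fin m ⊕ Fin 2) → K |
    (p ∘ Sum.inl, p (Sum.inr 0)) ∈ Y ∧
      V.v (p (Sum.inr 1)) = ((a (p ∘ Sum.inl, p (Sum.inr 0)) : Γ) : WithTop Γ)}

/-- A function `c : Y → RV^*`, `Y ⊆ K`, represented by a lift `c : Y → K^×`, is definable iff
`{(y,s) : y ∈ Y, rv s = c y}` is definable. -/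
def DefRVOn (Y : Set K) (c : K → K) : Prop :=
  Set.Definable (univ : Set K) L {p : Fin 2 → K | p 0 ∈ Y ∧ V.rvEq (p 1) (c (p 0))}

/-- `(K,L)` is definably complete: every definable family of nested balls whose set of radii
is unbounded has non-empty intersection. -/
def DefComplete : Prop :=
  ∀ (m : ℕ) (D : Set ((Fin m → K) × K)), DefFamSet L D →
    (∀ t : Fin m → K, ({x : K | (t, x) ∈ D}).Nonempty → V.IsBall {x : K | (t, x) ∈ D}) →
    (∀ t t' : Fin m → K, ({x : K | (t, x) ∈ D}).Nonempty → ({x : K | (t', x) ∈ D}).Nonempty →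
      {x : K | (t, x) ∈ D} ⊆ {x : K | (t', x) ∈ D} ∨
        {x : K | (t', x) ∈ D} ⊆ {x : K | (t, x) ∈ D}) →
    (∀ γ : Γ, ∃ (t : Fin m → K) (a : K), (t, a) ∈ D ∧
      ∀ x : K, (t, x) ∈ D → (γ : WithTop Γ) < V.v (x - a)) →
    ∃ x : K, ∀ t : Fin m → K, ({y : K | (t, y) ∈ D}).Nonempty → (t, x) ∈ D

/-- `h : Γ → Γ` is eventually linear. -/
def EvLinear (h : Γ → Γ) : Prop :=
  ∃ (δ α : Γ) (lam : Γ →+ Γ), ∀ γ : Γ, δ < γ → h γ = lam γ + α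

/-- `h : Γ → Γ` is eventually `ℚ`-linear. -/
def EvQLinear [Module ℚ Γ] (h : Γ → Γ) : Prop :=
  ∃ (δ α : Γ) (r : ℚ), ∀ γ : Γ, δ < γ → h γ = r • γ + α

/-- `(K,L)` is uniformly polynomially bounded. -/
def UnifPolyBdd : Prop :=
  ∀ (m : ℕ) (W : Set (Fin m → K)) (X : Set ((Fin m → K) × K)) (f : (Fin m → K) → K → K),
    DefSet L W → DefFamSet L X → DefFamFun L X f →
    (∀ p ∈ X, p.1 ∈ W) → (∀ w ∈ W, ∃ x : K, (w, x) ∈ X) →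
    ∃ (n : ℤ) (a : (Fin m → K) → Γ), DefGOnW V L W a ∧
      ∀ w ∈ W, ∀ x : K, (w, x) ∈ X → ∀ γ : Γ, V.v x = (γ : WithTop Γ) → γ < a w →
        ((n • γ : Γ) : WithTop Γ) < V.v (f w x)

end Defs

section Aux

namespace ValData

variable {K : Type u} {Γ : Type v} [Field K] [AddCommGroup Γ] [LinearOrder Γ] [IsOrderedAddMonoid Γ]
variable (V : ValData K Γ)

lemma v_one : V.v 1 = 0 := by
  have h := V.v_mul 1 1
  rw [one_mul] at h
  have hne : V.v 1 ≠ ⊤ := fun ht => one_ne_zero ((V.v_top 1).mp ht)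
  obtain ⟨g, hg⟩ := WithTop.ne_top_iff_exists.mp hne
  rw [← hg] at h ⊢
  have : g = g + g := by exact_mod_cast h
  have : g = 0 := by
    have h2 : g + g = g + 0 := by rw [add_zero]; exact this.symm
    exact add_left_cancel h2
  simp [this]

lemma v_neg_one : V.v (-1) = 0 := by
  have h := V.v_mul (-1) (-1)
  rw [neg_mul_neg, one_mul, V.v_one] at h
  have hne : V.v (-1) ≠ ⊤ := fun ht => (neg_ne_zero.mpr one_ne_zero) ((V.v_top (-1)).mp ht)
  obtain ⟨g, hg⟩ := WithTop.ne_top_iff_exists.mp hne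
  rw [← hg] at h ⊢
  have hg0 : g + g = 0 := by exact_mod_cast h.symm
  have : g = 0 := by
    rcases lt_trichotomy g 0 with hl | he | hr
    · exact absurd hg0 (by simpa using (add_lt_add hl hl).ne)
    · exact he
    · exact absurd hg0 (by simpa using (add_lt_add hr hr).ne')
  simp [this]

lemma v_neg (x : K) : V.v (-x) = V.v x := by
  have h := V.v_mul (-1) x
  rw [neg_one_mul, V.v_neg_one, zero_add] at h
  exact h

lemma v_sub_comm (x y : K) : V.v (x - y) = V.v (y - x) := by
  rw [← V.v_neg (y - x), neg_sub]

lemma v_add_of_lt {x y : K} (h : V.v x < V.v y) : V.v (x + y) = V.v x := by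
  refine le_antisymm ?_ ?_
  · by_contra hc
    push_neg at hc
    have h2 := V.v_add (x + y) (-y)
    rw [add_neg_cancel_right, V.v_neg] at h2
    exact absurd h2 (not_le.mpr (lt_min hc h))
  · have := V.v_add x y
    rwa [min_eq_left h.le] at this

lemma v_sub_le_left {a b : K} (h : ¬ V.rvEq a b) : V.v (a - b) ≤ V.v a := by
  rcases lt_trichotomy (V.v a) (V.v b) with hlt | heq | hgt
  · have : V.v (a + -b) = V.v a := V.v_add_of_lt (by rwa [V.v_neg])
    rw [← sub_eq_add_neg] at this
    exact this.le
  · exact not_lt.mp fun hl => h ⟨heq, hl⟩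
  · have : V.v (-b + a) = V.v (-b) := V.v_add_of_lt (by rwa [V.v_neg])
    rw [neg_add_eq_sub, V.v_neg] at this
    rw [this]
    exact hgt.le

lemma rvEq_symm {a b : K} (h : V.rvEq a b) : V.rvEq b a := by
  refine ⟨h.1.symm, ?_⟩
  rw [← h.1, V.v_sub_comm]
  exact h.2

lemma v_sub_le_right {a b : K} (h : ¬ V.rvEq a b) : V.v (a - b) ≤ V.v b := by
  have := V.v_sub_le_left (fun hba => h (V.rvEq_symm hba))
  rwa [V.v_sub_comm]

lemma key {a b a' b' : K} (h : ¬ V.rvEq a b) (ha' : V.rvEq a' a) (hb' : V.rvEq b' b) :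
    V.v (a' - b') = V.v (a - b) := by
  have h1 : V.v (a - b) ≤ V.v a := V.v_sub_le_left h
  have h2 : V.v (a - b) ≤ V.v b := V.v_sub_le_right h
  have ha1 : V.v a < V.v (a' - a) := ha'.1 ▸ ha'.2
  have hb1 : V.v b < V.v (b' - b) := hb'.1 ▸ hb'.2
  have hrest : V.v (a - b) < V.v ((a' - a) - (b' - b)) := by
    have := V.v_add (a' - a) (-(b' - b))
    rw [V.v_neg, ← sub_eq_add_neg] at this
    exact lt_of_lt_of_le (lt_min (h1.trans_lt ha1) (h2.trans_lt hb1)) this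
  have heq : a' - b' = (a - b) + ((a' - a) - (b' - b)) := by ring
  rw [heq, V.v_add_of_lt hrest]

end ValData

end Aux

/-- The characteristic exponent of `K`: `1` in characteristic `0`, `char K` otherwise. -/
noncomputable def charExp (K : Type u) [Field K] : ℕ := max (ringChar K) 1

/-- If `a, b, c ∈ K^×` lie in pairwise distinct `RV`-classes and
`rv a' = rv a`, `rv b' = rv b`, `rv c' = rv c` (with `a', b', c' ∈ K^×`), then
`C(a,b,c) ↔ C(a',b',c')`. -/
theorem stmt_0 {K : Type u} {Γ : Type v} [Field K] [IsAlgClosed K]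
    [AddCommGroup Γ] [LinearOrder Γ] [IsOrderedAddMonoid Γ] [Nontrivial Γ] (V : ValData K Γ)
    (a b c a' b' c' : K)
    (ha : a ≠ 0) (hb : b ≠ 0) (hc : c ≠ 0)
    (ha' : a' ≠ 0) (hb' : b' ≠ 0) (hc' : c' ≠ 0)
    (hab : ¬ V.rvEq a b) (hac : ¬ V.rvEq a c) (hbc : ¬ V.rvEq b c)
    (haa : V.rvEq a' a) (hbb : V.rvEq b' b) (hcc : V.rvEq c' c) :
    V.Crel a b c ↔ V.Crel a' b' c' := by
  have e1 : V.v (a' - b') = V.v (a - b) := V.key hab haa hbb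
  have e2 : V.v (a' - c') = V.v (a - c) := V.key hac haa hcc
  have e3 : V.v (b' - c') = V.v (b - c) := V.key hbc hbb hcc
  unfold ValData.Crel
  rw [e1, e2, e3]
end

section
/- Let k be an algebraically closed field, let s and t be coprime positive integers, and let g : k → k be a function such that g(0) = 0, the complement k∖g(k) of the image of g is finite, and (g(u) − g(z))^t = (u − z)^s for all u, z ∈ k. Then either s = t = 1, or k has positive characteristic q and there exists an integer j ≥ 1 such that (s, t) = (q^j, 1) or (s, t) = (1, q^j). -/
open Polynomial Finset


theorem my_bezout (s t : ℕ) (hs : 0 < s) (ht : 0 < t) (hst : Nat.Coprime s t) :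
    ∃ a b : ℕ, a * s = b * t + 1 := by
  have h1 : s ^ Nat.totient t ≡ 1 [MOD t] := Nat.ModEq.pow_totient hst
  have h2 : 1 ≤ s ^ Nat.totient t := Nat.one_le_pow _ _ hs
  have h3 : t ∣ s ^ Nat.totient t - 1 := (Nat.modEq_iff_dvd' h2).mp h1.symm
  obtain ⟨b, hb⟩ := h3
  refine ⟨s ^ (Nat.totient t - 1), b, ?_⟩
  have ht' : 1 ≤ Nat.totient t := Nat.totient_pos.mpr ht
  rw [← pow_succ, Nat.sub_add_cancel ht', mul_comm b t, ← hb, Nat.sub_add_cancel h2]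

theorem my_key {k : Type*} [Field k] [IsAlgClosed k] (s t : ℕ)
    (hs : 0 < s) (ht : 0 < t) (hst : Nat.Coprime s t)
    (g : k → k)
    (heq : ∀ u z : k, (g u - g z) ^ t = (u - z) ^ s) :
    (∀ j, 0 < j → j < t → (t.choose j : k) = 0) ∧
      (∀ i, 0 < i → i < s → (s.choose i : k) = 0) := by
  classical
  obtain ⟨a, b, hab⟩ := my_bezout s t hs ht hst
  -- the set of t-th roots of unity is finite
  have hRfin : {x : k | x ^ t = 1}.Finite := by
    have hne : (X ^ t - C 1 : k[X]) ≠ 0 :=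
      (Polynomial.monic_X_pow_sub_C (1 : k) ht.ne').ne_zero
    refine Set.Finite.subset (Polynomial.finite_setOf_isRoot hne) ?_
    intro x hx
    simp only [Set.mem_setOf_eq] at hx ⊢
    simp [IsRoot, hx]
  -- the difference function takes values in t-th roots of unity
  set f : k → k := fun u => g (u + 1) - g u with hf
  have hfR : ∀ u : k, (f u) ^ t = 1 := by
    intro u
    have := heq (u + 1) u
    simpa using this
  -- some fiber is infinite
  obtain ⟨ρ, hρfib⟩ : ∃ ρ : k, (f ⁻¹' {ρ}).Infinite := by
    by_contra hcon
    push_neg at hcon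
    have hfib : ∀ ρ : k, (f ⁻¹' {ρ}).Finite := fun ρ => hcon ρ
    have : (Set.univ : Set k).Finite := by
      refine Set.Finite.subset (Set.Finite.biUnion hRfin (fun ρ _ => hfib ρ)) ?_
      intro u _
      exact Set.mem_biUnion (hfR u) rfl
    exact Set.infinite_univ this
  have hρt : ρ ^ t = 1 := by
    obtain ⟨u, hu⟩ := hρfib.nonempty
    simp only [Set.mem_preimage, Set.mem_singleton_iff] at hu
    rw [← hu]; exact hfR u
  have hρ0 : ρ ≠ 0 := by
    intro h; rw [h, zero_pow ht.ne'] at hρt; exact zero_ne_one hρt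
  obtain ⟨u₀, hu₀⟩ := hρfib.nonempty
  have hU : (f ⁻¹' {ρ} \ {u₀}).Infinite := hρfib.diff (Set.finite_singleton u₀)
  -- the root-producing map
  set w : k → k := fun u => (g u - g u₀) ^ a / (u - u₀) ^ b with hw
  set P : k[X] := (X ^ s + C ρ) ^ t - (X ^ t + C 1) ^ s with hP
  have hwt : ∀ u ∈ f ⁻¹' {ρ} \ {u₀}, (w u) ^ t = u - u₀ := by
    rintro u ⟨hu, hne⟩
    simp only [Set.mem_singleton_iff] at hne
    set x := g u - g u₀ with hx
    set y := u - u₀ with hy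
    have hy0 : y ≠ 0 := sub_ne_zero.mpr hne
    have hxy : x ^ t = y ^ s := heq u u₀
    have hxat : x ^ (a * t) = y ^ (b * t) * y := by
      calc x ^ (a * t) = (x ^ t) ^ a := by rw [mul_comm, pow_mul]
        _ = (y ^ s) ^ a := by rw [hxy]
        _ = y ^ (s * a) := by rw [← pow_mul]
        _ = y ^ (b * t + 1) := by rw [mul_comm s a, hab]
        _ = y ^ (b * t) * y := by rw [pow_succ]
    show (x ^ a / y ^ b) ^ t = y
    rw [div_pow, ← pow_mul, ← pow_mul, hxat]
    exact mul_div_cancel_left₀ y (pow_ne_zero _ hy0)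
  have hws : ∀ u ∈ f ⁻¹' {ρ} \ {u₀}, (w u) ^ s = g u - g u₀ := by
    rintro u ⟨hu, hne⟩
    simp only [Set.mem_singleton_iff] at hne
    set x := g u - g u₀ with hx
    set y := u - u₀ with hy
    have hy0 : y ≠ 0 := sub_ne_zero.mpr hne
    have hxy : x ^ t = y ^ s := heq u u₀
    have hxas : x ^ (a * s) = y ^ (b * s) * x := by
      calc x ^ (a * s) = x ^ (b * t + 1) := by rw [hab]
        _ = (x ^ t) ^ b * x := by rw [pow_succ, mul_comm b t, pow_mul]
        _ = (y ^ s) ^ b * x := by rw [hxy]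
        _ = y ^ (b * s) * x := by rw [← pow_mul, mul_comm s b]
    show (x ^ a / y ^ b) ^ s = x
    rw [div_pow, ← pow_mul, ← pow_mul, hxas]
    exact mul_div_cancel_left₀ x (pow_ne_zero _ hy0)
  have hroot : ∀ u ∈ f ⁻¹' {ρ} \ {u₀}, P.IsRoot (w u) := by
    rintro u hu
    obtain ⟨hu1, hne⟩ := hu
    simp only [Set.mem_singleton_iff] at hne
    have hfu : g (u + 1) - g u = ρ := by
      have := hu1
      simp only [Set.mem_preimage, Set.mem_singleton_iff] at this
      exact this
    have hkey : ((g u - g u₀) + ρ) ^ t = ((u - u₀) + 1) ^ s := by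
      have h1 : g (u + 1) - g u₀ = (g u - g u₀) + ρ := by rw [← hfu]; ring
      have h2 : (u + 1) - u₀ = (u - u₀) + 1 := by ring
      have := heq (u + 1) u₀
      rw [h1, h2] at this
      exact this
    have e1 := hwt u ⟨hu1, hne⟩
    have e2 := hws u ⟨hu1, hne⟩
    simp only [IsRoot, hP, eval_sub, eval_pow, eval_add, eval_C, eval_X]
    rw [e1, e2, hkey, sub_self]
  -- infinitely many roots, so P = 0
  have hP0 : P = 0 := by
    apply Polynomial.eq_zero_of_infinite_isRoot
    have hinj : Set.InjOn w (f ⁻¹' {ρ} \ {u₀}) := by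
      intro u hu v hv huv
      have := hwt u hu
      have h2 := hwt v hv
      have : u - u₀ = v - u₀ := by rw [← hwt u hu, ← hwt v hv, huv]
      exact sub_left_injective this
    have himg : (w '' (f ⁻¹' {ρ} \ {u₀})).Infinite :=
      (Set.infinite_image_iff hinj).mpr hU
    refine himg.mono ?_
    rintro x ⟨u, hu, rfl⟩
    exact hroot u hu
  have hAB : (X ^ s + C ρ) ^ t = (X ^ t + C 1 : k[X]) ^ s := by
    have := sub_eq_zero.mp (hP ▸ hP0)
    exact this
  -- expand both sides
  have expandL : (X ^ s + C ρ : k[X]) ^ t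
      = ∑ m ∈ Finset.range (t + 1), C (ρ ^ (t - m) * (t.choose m : k)) * X ^ (s * m) := by
    rw [add_pow]
    refine Finset.sum_congr rfl fun m hm => ?_
    rw [← pow_mul, ← C_pow, ← C_eq_natCast, C_mul]
    ring
  have expandR : (X ^ t + C 1 : k[X]) ^ s
      = ∑ i ∈ Finset.range (s + 1), C ((s.choose i : k)) * X ^ (t * i) := by
    rw [add_pow]
    refine Finset.sum_congr rfl fun i hi => ?_
    rw [← pow_mul, ← C_pow, one_pow, ← C_eq_natCast, C_1]
    ring
  rw [expandL, expandR] at hAB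
  constructor
  · intro j hj0 hjt
    have hc := congrArg (fun q => Polynomial.coeff q (s * j)) hAB
    simp only [Polynomial.finset_sum_coeff, Polynomial.coeff_C_mul_X_pow] at hc
    have hL : ∑ m ∈ Finset.range (t + 1),
        (if s * j = s * m then ρ ^ (t - m) * (t.choose m : k) else 0)
        = ρ ^ (t - j) * (t.choose j : k) := by
      rw [Finset.sum_eq_single j]
      · rw [if_pos rfl]
      · intro m hm hmj
        exact if_neg fun h => hmj (Nat.eq_of_mul_eq_mul_left hs h).symm
      · intro hj
        exact absurd (Finset.mem_range.mpr (by omega)) hj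
    have hR : ∑ i ∈ Finset.range (s + 1),
        (if s * j = t * i then (s.choose i : k) else 0) = 0 := by
      apply Finset.sum_eq_zero
      intro i hi
      apply if_neg
      intro h
      have hdvd : t ∣ j * s := ⟨i, by rw [mul_comm]; exact h⟩
      have : t ∣ j := (Nat.Coprime.dvd_of_dvd_mul_right hst.symm) hdvd
      have := Nat.le_of_dvd hj0 this
      omega
    rw [hL, hR] at hc
    exact (mul_eq_zero.mp hc).resolve_left (pow_ne_zero _ hρ0)
  · intro i hi0 his
    have hc := congrArg (fun q => Polynomial.coeff q (t * i)) hAB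
    simp only [Polynomial.finset_sum_coeff, Polynomial.coeff_C_mul_X_pow] at hc
    have hL : ∑ m ∈ Finset.range (t + 1),
        (if t * i = s * m then ρ ^ (t - m) * (t.choose m : k) else 0) = 0 := by
      apply Finset.sum_eq_zero
      intro m hm
      apply if_neg
      intro h
      have hdvd : s ∣ i * t := ⟨m, by rw [mul_comm]; exact h⟩
      have : s ∣ i := (Nat.Coprime.dvd_of_dvd_mul_right hst) hdvd
      have := Nat.le_of_dvd hi0 this
      omega
    have hR : ∑ i' ∈ Finset.range (s + 1),
        (if t * i = t * i' then (s.choose i' : k) else 0) = (s.choose i : k) := by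
      rw [Finset.sum_eq_single i]
      · rw [if_pos rfl]
      · intro m hm hmi
        exact if_neg fun h => hmi (Nat.eq_of_mul_eq_mul_left ht h).symm
      · intro hi
        exact absurd (Finset.mem_range.mpr (by omega)) hi
    rw [hL, hR] at hc
    exact hc.symm

-- prime power lemma
theorem my_primepow {k : Type*} [Field k] [IsAlgClosed k] {p : ℕ} (hp : p.Prime)
    [CharP k p] {n : ℕ} (hn : 2 ≤ n)
    (h : ∀ i, 0 < i → i < n → (n.choose i : k) = 0) :
    ∃ j : ℕ, 1 ≤ j ∧ n = p ^ j := by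
  haveI := Fact.mk hp
  have hadd : ∀ x y : k, (x + y) ^ n = x ^ n + y ^ n := by
    intro x y
    rw [add_pow]
    have h0n : (0 : ℕ) ≠ n := by omega
    rw [show (Finset.range (n+1)) = insert 0 (insert n (Finset.range (n+1) \ {0, n})) by
      ext i; simp [Finset.mem_range, Finset.mem_sdiff]; omega]
    rw [Finset.sum_insert (by simp [Finset.mem_sdiff] <;> omega),
      Finset.sum_insert (by simp [Finset.mem_sdiff] <;> omega)]
    have : ∑ i ∈ Finset.range (n+1) \ {0, n}, x ^ i * y ^ (n - i) * (n.choose i : k) = 0 := by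
      apply Finset.sum_eq_zero
      intro i hi
      simp only [Finset.mem_sdiff, Finset.mem_range, Finset.mem_insert, Finset.mem_singleton] at hi
      rw [h i (by omega) (by omega), mul_zero]
    rw [this, add_zero]
    simp [add_comm]
  have hn0 : n ≠ 0 := by omega
  obtain ⟨j, m, hnm, hpm, hm0⟩ : ∃ j m, p ^ j * m = n ∧ ¬ p ∣ m ∧ m ≠ 0 :=
    ⟨_, _, Nat.ordProj_mul_ordCompl_eq_self n p, Nat.not_dvd_ordCompl hp hn0,
      (Nat.ordCompl_pos p hn0).ne'⟩
  have hm1 : m = 1 := by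
    by_contra hm1
    have hm2 : 2 ≤ m := by omega
    have haddm : ∀ x y : k, (x + y) ^ m = x ^ m + y ^ m := by
      intro x y
      obtain ⟨x', hx'⟩ := IsAlgClosed.exists_pow_nat_eq x (pow_pos hp.pos j)
      obtain ⟨y', hy'⟩ := IsAlgClosed.exists_pow_nat_eq y (pow_pos hp.pos j)
      have key := hadd x' y'
      rw [← hnm, pow_mul, pow_mul, pow_mul, add_pow_char_pow, hx', hy'] at key
      exact key
    have hq : ((X + 1 : k[X]) ^ m - X ^ m - 1) = 0 := by
      apply Polynomial.eq_zero_of_infinite_isRoot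
      apply Set.infinite_of_injective_forall_mem (f := fun x : k => x)
      · exact fun a b hab => hab
      · intro x
        simp only [Set.mem_setOf_eq, IsRoot, eval_sub, eval_pow, eval_add, eval_one, eval_X]
        rw [haddm x 1, one_pow]; ring
    have hc := congrArg (fun q => Polynomial.coeff q 1) hq
    simp only [coeff_sub, Polynomial.coeff_X_add_one_pow, Nat.choose_one_right,
      coeff_X_pow, coeff_one, coeff_zero] at hc
    rw [if_neg (by omega), if_neg (by omega)] at hc
    have : (m : k) = 0 := by simpa using hc
    exact hpm ((CharP.cast_eq_zero_iff k p m).mp this)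
  rw [hm1, mul_one] at hnm
  refine ⟨j, ?_, hnm.symm⟩
  by_contra hj1
  have : j = 0 := by omega
  rw [this, pow_zero] at hnm; omega


/-- Let `k` be an algebraically closed field, `s` and `t` coprime positive
integers, and `g : k → k` a function with `g 0 = 0`, whose image has finite complement, and
such that `(g u − g z) ^ t = (u − z) ^ s` for all `u z : k`. Then either `s = t = 1`, or `k`
has positive characteristic `q` and there is an integer `j ≥ 1` with `(s, t) = (q ^ j, 1)` or
`(s, t) = (1, q ^ j)`. -/
theorem stmt_15 {k : Type*} [Field k] [IsAlgClosed k] (s t : ℕ)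
    (hs : 0 < s) (ht : 0 < t) (hst : Nat.Coprime s t)
    (g : k → k) (hg0 : g 0 = 0) (hfin : (Set.range g)ᶜ.Finite)
    (heq : ∀ u z : k, (g u - g z) ^ t = (u - z) ^ s) :
    (s = 1 ∧ t = 1) ∨
      (0 < ringChar k ∧ ∃ j : ℕ, 1 ≤ j ∧
        ((s = ringChar k ^ j ∧ t = 1) ∨ (s = 1 ∧ t = ringChar k ^ j))) := by
  obtain ⟨hT, hS⟩ := my_key s t hs ht hst g heq
  haveI : CharP k (ringChar k) := ringChar.charP k
  by_cases hs1 : s = 1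
  · by_cases ht1 : t = 1
    · exact Or.inl ⟨hs1, ht1⟩
    · have ht2 : 2 ≤ t := by omega
      have htk : (t : k) = 0 := by
        simpa [Nat.choose_one_right] using hT 1 one_pos (by omega)
      have hpd : ringChar k ∣ t := (CharP.cast_eq_zero_iff k (ringChar k) t).mp htk
      have hp0 : ringChar k ≠ 0 := by
        rintro h; rw [h] at hpd; exact absurd (zero_dvd_iff.mp hpd) (by omega)
      have hpp : (ringChar k).Prime := (CharP.char_is_prime_or_zero k _).resolve_right hp0
      obtain ⟨j, hj1, hjt⟩ := my_primepow (p := ringChar k) hpp ht2 hT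
      exact Or.inr ⟨Nat.pos_of_ne_zero hp0, j, hj1, Or.inr ⟨hs1, hjt⟩⟩
  · have hs2 : 2 ≤ s := by omega
    have hsk : (s : k) = 0 := by
      simpa [Nat.choose_one_right] using hS 1 one_pos (by omega)
    have hpd : ringChar k ∣ s := (CharP.cast_eq_zero_iff k (ringChar k) s).mp hsk
    have hp0 : ringChar k ≠ 0 := by
      rintro h; rw [h] at hpd; exact absurd (zero_dvd_iff.mp hpd) (by omega)
    have hpp : (ringChar k).Prime := (CharP.char_is_prime_or_zero k _).resolve_right hp0
    by_cases ht1 : t = 1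
    · obtain ⟨j, hj1, hjs⟩ := my_primepow (p := ringChar k) hpp hs2 hS
      exact Or.inr ⟨Nat.pos_of_ne_zero hp0, j, hj1, Or.inl ⟨hjs, ht1⟩⟩
    · exfalso
      have ht2 : 2 ≤ t := by omega
      have htk : (t : k) = 0 := by
        simpa [Nat.choose_one_right] using hT 1 one_pos (by omega)
      have hpdt : ringChar k ∣ t := (CharP.cast_eq_zero_iff k (ringChar k) t).mp htk
      have h1 : ringChar k ∣ 1 := hst ▸ Nat.dvd_gcd hpd hpdt
      exact hpp.one_lt.ne' (Nat.dvd_one.mp h1)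
end
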